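/- Let S be a finite singleton-rich semigroup, s, t ∈ S, and e, f ∈ E(S) with t⁺ ≤ e and s* ≤ f. Then φ^{(s,t)} = φ^{(s,ft)} and ψ^{(s,t)} = ψ^{(se,t)}. -/
import Mathlib


open scoped Classical

/-- φ*(s): the idempotent right identities of `s`. -/
def rIds {S : Type*} [Mul S] (s : S) : Set S := {e | e * e = e ∧ s * e = s}

/-- φ⁺(s): the idempotent left identities of `s`. -/
def lIds {S : Type*} [Mul S] (s : S) : Set S := {e | e * e = e ∧ e * s = s}

/-- `x` is the (necessarily unique) element of a singleton kernel (minimal ideal) of the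
subsemigroup `T`: `{x}` is an ideal of `T`, hence the minimal ideal of `T`. -/
def IsKer {S : Type*} [Semigroup S] (T : Subsemigroup S) (x : S) : Prop :=
  x ∈ T ∧ ∀ a ∈ T, a * x = x ∧ x * a = x

/-- The natural partial order on idempotents: `e ≤ f` iff `ef = fe = e`. -/
def nle {S : Type*} [Mul S] (e f : S) : Prop := e * f = e ∧ f * e = e

/-- The relation `≪`: `s ≪ t` iff `s = s⁺ t s*`, where `sa s = s*` and `pl s = s⁺`. -/
def ll {S : Type*} [Mul S] (sa pl : S → S) (s t : S) : Prop := s = pl s * t * sa s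

/-- φ(x,y) = (x* y)⁺. -/
def phiF {S : Type*} [Mul S] (sa pl : S → S) (x y : S) : S := pl (sa x * y)

/-- ψ(x,y) = (x y⁺)*. -/
def psiF {S : Type*} [Mul S] (sa pl : S → S) (x y : S) : S := sa (x * pl y)

/-- The φ-sequence: `(s^φ₀, t^φ₀) = (s, t)`,
`s^φ_{i+1} = s^φ_i φ(s^φ_i, t^φ_i)`, `t^φ_{i+1} = (s^φ_i)* t^φ_i`. -/
def phiSeq {S : Type*} [Mul S] (sa pl : S → S) (s t : S) : ℕ → S × S
  | 0 => (s, t)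
  | i + 1 =>
      let p := phiSeq sa pl s t i
      (p.1 * phiF sa pl p.1 p.2, sa p.1 * p.2)

/-- The ψ-sequence: `(s^ψ₀, t^ψ₀) = (s, t)`,
`s^ψ_{i+1} = s^ψ_i (t^ψ_i)⁺`, `t^ψ_{i+1} = ψ(s^ψ_i, t^ψ_i) t^ψ_i`. -/
def psiSeq {S : Type*} [Mul S] (sa pl : S → S) (s t : S) : ℕ → S × S
  | 0 => (s, t)
  | i + 1 =>
      let p := psiSeq sa pl s t i
      (p.1 * pl p.2, psiF sa pl p.1 p.2 * p.2)

/-- `e` is the stable (eventual) value `φ^{(s,t)}` of the sequence `φ(s^φ_i, t^φ_i)`. -/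
def IsPhiLim {S : Type*} [Mul S] (sa pl : S → S) (s t e : S) : Prop :=
  ∃ N : ℕ, ∀ i ≥ N, phiF sa pl (phiSeq sa pl s t i).1 (phiSeq sa pl s t i).2 = e

/-- `e` is the stable (eventual) value `ψ^{(s,t)}` of the sequence `ψ(s^ψ_i, t^ψ_i)`. -/
def IsPsiLim {S : Type*} [Mul S] (sa pl : S → S) (s t e : S) : Prop :=
  ∃ N : ℕ, ∀ i ≥ N, psiF sa pl (psiSeq sa pl s t i).1 (psiSeq sa pl s t i).2 = e

/-- If `e, f` are idempotents with `t⁺ ≤ e` and `s* ≤ f`, then `φ^{(s,t)} = φ^{(s,ft)}` and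
`ψ^{(s,t)} = ψ^{(se,t)}`. -/
theorem stmt16 {S : Type*} [Semigroup S] [Fintype S] (sa pl : S → S)
    (hsa : ∀ s : S, IsKer (Subsemigroup.closure (rIds s)) (sa s))
    (hpl : ∀ s : S, IsKer (Subsemigroup.closure (lIds s)) (pl s))
    (s t e f : S) (he : e * e = e) (hf : f * f = f)
    (hte : nle (pl t) e) (hsf : nle (sa s) f)
    (phiL phiL' psiL psiL' : S)
    (h1 : IsPhiLim sa pl s t phiL) (h2 : IsPhiLim sa pl s (f * t) phiL')
    (h3 : IsPsiLim sa pl s t psiL) (h4 : IsPsiLim sa pl (s * e) t psiL') :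
    phiL = phiL' ∧ psiL = psiL' := by
  have hkey1 : ∀ i, phiSeq sa pl s t (i+1) = phiSeq sa pl s (f*t) (i+1) := by
    intro i
    induction i with
    | zero =>
      have h : sa s * (f * t) = sa s * t := by rw [← mul_assoc, hsf.1]
      simp [phiSeq, phiF, h]
    | succ n ih =>
      have step : ∀ (u : S) (k : ℕ), phiSeq sa pl s u (k+1) =
          ((phiSeq sa pl s u k).1 * phiF sa pl (phiSeq sa pl s u k).1 (phiSeq sa pl s u k).2,
            sa (phiSeq sa pl s u k).1 * (phiSeq sa pl s u k).2) := fun u k => rfl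
      rw [step _ (n+1), step _ (n+1), ih]
  have hkey2 : ∀ i, psiSeq sa pl s t (i+1) = psiSeq sa pl (s*e) t (i+1) := by
    intro i
    induction i with
    | zero =>
      have h : (s * e) * pl t = s * pl t := by rw [mul_assoc, hte.2]
      simp [psiSeq, psiF, h]
    | succ n ih =>
      have step : ∀ (u : S) (k : ℕ), psiSeq sa pl u t (k+1) =
          ((psiSeq sa pl u t k).1 * pl (psiSeq sa pl u t k).2,
            psiF sa pl (psiSeq sa pl u t k).1 (psiSeq sa pl u t k).2 * (psiSeq sa pl u t k).2) := fun u k => rfl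
      rw [step _ (n+1), step _ (n+1), ih]
  obtain ⟨N1, hN1⟩ := h1
  obtain ⟨N2, hN2⟩ := h2
  obtain ⟨N3, hN3⟩ := h3
  obtain ⟨N4, hN4⟩ := h4
  constructor
  · have h1' := hN1 (max N1 N2 + 1) (by omega)
    have h2' := hN2 (max N1 N2 + 1) (by omega)
    rw [← h1', ← h2', hkey1]
  · have h3' := hN3 (max N3 N4 + 1) (by omega)
    have h4' := hN4 (max N3 N4 + 1) (by omega)
    rw [← h3', ← h4', hkey2]
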